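/- arXiv:0806.2058 — 2 statements merged into one kernel-verified Lean document; each statement's English description precedes it below -/
import Mathlib

section
/- The closure of Q in ℝ^{m₁×m₂} equals the set C defined by the corresponding weak inequalities, i.e. cl(Q) = C. -/
/-- The open domain `Q` of the obliquely reflected BSDE. -/
def gameQ (m₁ m₂ : ℕ) (k : Fin m₁ → Fin m₁ → ℝ) (l : Fin m₂ → Fin m₂ → ℝ) :
    Set (Fin m₁ → Fin m₂ → ℝ) :=
  {y | (∀ i i' : Fin m₁, i' ≠ i → ∀ j : Fin m₂, y i j < y i' j + k i i') ∧
       (∀ j j' : Fin m₂, j' ≠ j → ∀ i : Fin m₁, y i j' - l j j' < y i j)}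

/-- The set `C` defined by the corresponding weak inequalities. -/
def gameC (m₁ m₂ : ℕ) (k : Fin m₁ → Fin m₁ → ℝ) (l : Fin m₂ → Fin m₂ → ℝ) :
    Set (Fin m₁ → Fin m₂ → ℝ) :=
  {y | (∀ i i' : Fin m₁, i' ≠ i → ∀ j : Fin m₂, y i j ≤ y i' j + k i i') ∧
       (∀ j j' : Fin m₂, j' ≠ j → ∀ i : Fin m₁, y i j' - l j j' ≤ y i j)}

/-- The closure of `Q` equals the set `C` defined by the weak inequalities. -/
theorem closure_gameQ_eq_gameC
    (m₁ m₂ : ℕ) (hm₁ : 1 ≤ m₁) (hm₂ : 1 ≤ m₂)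
    (k : Fin m₁ → Fin m₁ → ℝ) (l : Fin m₂ → Fin m₂ → ℝ)
    (hk0 : ∀ i, k i i = 0) (hkpos : ∀ i i', i ≠ i' → 0 < k i i')
    (hl0 : ∀ j, l j j = 0) (hlpos : ∀ j j', j ≠ j' → 0 < l j j') :
    closure (gameQ m₁ m₂ k l) = gameC m₁ m₂ k l := by
  apply Set.Subset.antisymm
  · apply closure_minimal
    · intro y hy
      exact ⟨fun i i' h j => (hy.1 i i' h j).le, fun j j' h i => (hy.2 j j' h i).le⟩
    · have hC : gameC m₁ m₂ k l =
          (⋂ i, ⋂ i', ⋂ (_ : i' ≠ i), ⋂ j,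
            {y : Fin m₁ → Fin m₂ → ℝ | y i j ≤ y i' j + k i i'}) ∩
          (⋂ j, ⋂ j', ⋂ (_ : j' ≠ j), ⋂ i,
            {y : Fin m₁ → Fin m₂ → ℝ | y i j' - l j j' ≤ y i j}) := by
        ext y
        simp only [gameC, Set.mem_setOf_eq, Set.mem_inter_iff, Set.mem_iInter]
      rw [hC]
      apply IsClosed.inter
      all_goals
        refine isClosed_iInter fun a => isClosed_iInter fun b =>
          isClosed_iInter fun hab => isClosed_iInter fun c => ?_
        exact isClosed_le (by fun_prop) (by fun_prop)
  · intro y hy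
    have hten : Filter.Tendsto (fun t : ℝ => (1 - t) • y)
        (nhdsWithin 0 (Set.Ioo 0 1)) (nhds y) := by
      have hc : Continuous (fun t : ℝ => (1 - t) • y) := by fun_prop
      have := (hc.tendsto 0).mono_left
        (nhdsWithin_le_nhds (s := Set.Ioo (0:ℝ) 1))
      simpa using this
    haveI : Filter.NeBot (nhdsWithin (0:ℝ) (Set.Ioo 0 1)) :=
      left_nhdsWithin_Ioo_neBot one_pos
    refine mem_closure_of_tendsto hten ?_
    filter_upwards [self_mem_nhdsWithin] with t ht
    obtain ⟨ht0, ht1⟩ := ht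
    refine ⟨fun i i' h j => ?_, fun j j' h i => ?_⟩
    · have h1 := hy.1 i i' h j
      have h2 := hkpos i i' h.symm
      simp only [Pi.smul_apply, smul_eq_mul]
      nlinarith [mul_le_mul_of_nonneg_left h1 (by linarith : (0:ℝ) ≤ 1 - t)]
    · have h1 := hy.2 j j' h i
      have h2 := hlpos j j' h.symm
      simp only [Pi.smul_apply, smul_eq_mul]
      nlinarith [mul_le_mul_of_nonneg_left h1 (by linarith : (0:ℝ) ≤ 1 - t)]
end

section
/- Let {(i_p, j_p)}_{p=0}^N be a loop whose total cost Σ_{p=1}^N [k(i_{p−1}, i_p) − l(j_{p−1}, j_p)] is nonzero. Then for every R > 0 there exists ε > 0 such that: for all matrices y⁽¹⁾, …, y⁽ᴺ⁾ ∈ ℝ^{m₁×m₂} satisfying |y⁽ᵖ⁾| ≤ R and y⁽ᵖ⁾ ∈ F_p for each p = 1, …, N, one has Σ_{p=1}^N |y⁽ᵖ⁾ − y⁽ᵖ⁻¹⁾|² ≥ ε, where y⁽⁰⁾ := y⁽ᴺ⁾. Here F_p := {y ∈ ℝ^{m₁×m₂} : y_{i_{p−1} j_{p−1}} = y_{i_p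 j_{p−1}} + k(i_{p−1}, i_p)} if j_{p−1} = j_p, and F_p := {y ∈ ℝ^{m₁×m₂} : y_{i_{p−1} j_{p−1}} = y_{i_{p−1} j_p} − l(j_{p−1}, j_p)} if i_{p−1} = i_p. In other words, the infimum in the paper's definition of the length of a loop of nonzero cost, taken over configurations in a bounded region, is strictly positive. -/
/-- The absolute value of a coordinate is at most the Euclidean norm. -/
lemma abs_coord_le_norm {ι : Type*} [Fintype ι] (x : EuclideanSpace ℝ ι) (c : ι) :
    |x c| ≤ ‖x‖ := by
  rw [EuclideanSpace.norm_eq]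
  have h1 : |x c| = Real.sqrt ((x c) ^ 2) := by
    rw [Real.sqrt_sq_eq_abs]
  rw [h1]
  apply Real.sqrt_le_sqrt
  have := Finset.single_le_sum (f := fun i => ‖x i‖ ^ 2)
    (fun i _ => by positivity) (Finset.mem_univ c)
  calc (x c) ^ 2 = ‖x c‖ ^ 2 := by rw [Real.norm_eq_abs, sq_abs]
    _ ≤ _ := this

/-- For a loop `{(i_p, j_p)}_{p=0}^N` of nonzero total cost
`Σ_{p=1}^N [k(i_{p−1},i_p) − l(j_{p−1},j_p)]`, and any radius `R > 0`, the
squared length `Σ_{p=1}^N |y⁽ᵖ⁾ − y⁽ᵖ⁻¹⁾|²` of any configuration of matrices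
`y⁽ᵖ⁾` with `|y⁽ᵖ⁾| ≤ R` and `y⁽ᵖ⁾ ∈ F_p` (with `y⁽⁰⁾ := y⁽ᴺ⁾`) is bounded
below by some `ε > 0`. -/
theorem loop_length_pos
    (m₁ m₂ : ℕ) (hm₁ : 1 ≤ m₁) (hm₂ : 1 ≤ m₂)
    (k : Fin m₁ → Fin m₁ → ℝ) (l : Fin m₂ → Fin m₂ → ℝ)
    (hk0 : ∀ i, k i i = 0) (hl0 : ∀ j, l j j = 0)
    (N : ℕ) (hN : 1 ≤ N) (i : ℕ → Fin m₁) (j : ℕ → Fin m₂)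
    (hclose : i N = i 0 ∧ j N = j 0)
    (hstep : ∀ p, 1 ≤ p → p ≤ N → i (p - 1) = i p ∨ j (p - 1) = j p)
    (hcost : ∑ p ∈ Finset.Icc 1 N, (k (i (p - 1)) (i p) - l (j (p - 1)) (j p)) ≠ 0) :
    ∀ R : ℝ, 0 < R → ∃ ε : ℝ, 0 < ε ∧
      ∀ y : ℕ → EuclideanSpace ℝ (Fin m₁ × Fin m₂),
        y 0 = y N →
        (∀ p, 1 ≤ p → p ≤ N → ‖y p‖ ≤ R) →
        (∀ p, 1 ≤ p → p ≤ N →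
          (j (p - 1) = j p →
            y p (i (p - 1), j (p - 1)) = y p (i p, j (p - 1)) + k (i (p - 1)) (i p)) ∧
          (i (p - 1) = i p →
            y p (i (p - 1), j (p - 1)) = y p (i (p - 1), j p) - l (j (p - 1)) (j p))) →
        ε ≤ ∑ p ∈ Finset.Icc 1 N, ‖y p - y (p - 1)‖ ^ 2 := by
  intro R hR
  set C : ℝ := ∑ p ∈ Finset.Icc 1 N, (k (i (p - 1)) (i p) - l (j (p - 1)) (j p)) with hCdef
  have hNpos : (0 : ℝ) < N := by exact_mod_cast hN
  refine ⟨C ^ 2 / N, by positivity, ?_⟩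
  intro y hy0 _hyR hF
  -- key pointwise identity
  have key : ∀ p, 1 ≤ p → p ≤ N →
      y p (i (p - 1), j (p - 1)) - y p (i p, j p)
        = k (i (p - 1)) (i p) - l (j (p - 1)) (j p) := by
    intro p h1 h2
    rcases hstep p h1 h2 with h | h
    · have heq := (hF p h1 h2).2 h
      rw [← h, hk0]
      linarith
    · have heq := (hF p h1 h2).1 h
      rw [h, hl0]
      rw [h] at heq
      linarith
  -- C as a telescoped sum of coordinate differences
  have hC : C = ∑ p ∈ Finset.Icc 1 N,
      (y p (i (p - 1), j (p - 1)) - y (p - 1) (i (p - 1), j (p - 1))) := by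
    rw [hCdef]
    have h1 : ∀ p ∈ Finset.Icc 1 N,
        (k (i (p - 1)) (i p) - l (j (p - 1)) (j p))
          = y p (i (p - 1), j (p - 1)) - y p (i p, j p) := by
      intro p hp
      rw [Finset.mem_Icc] at hp
      exact (key p hp.1 hp.2).symm
    rw [Finset.sum_congr rfl h1]
    have htel : ∑ p ∈ Finset.Icc 1 N,
        (y p (i p, j p) - y (p - 1) (i (p - 1), j (p - 1))) = 0 := by
      rw [← Finset.Ico_add_one_right_eq_Icc, Finset.sum_Ico_eq_sum_range]
      have : ∀ q ∈ Finset.range (N + 1 - 1),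
          y (1 + q) (i (1 + q), j (1 + q)) - y (1 + q - 1) (i (1 + q - 1), j (1 + q - 1))
            = y (q + 1) (i (q + 1), j (q + 1)) - y q (i q, j q) := by
        intro q _
        rw [Nat.add_comm 1 q, Nat.add_sub_cancel]
      rw [Finset.sum_congr rfl this, Finset.sum_range_sub (fun q => y q (i q, j q))]
      rw [Nat.add_sub_cancel] at *
      rw [hy0, hclose.1, hclose.2]
      ring
    calc ∑ p ∈ Finset.Icc 1 N, (y p (i (p - 1), j (p - 1)) - y p (i p, j p))
        = ∑ p ∈ Finset.Icc 1 N,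
            ((y p (i (p - 1), j (p - 1)) - y (p - 1) (i (p - 1), j (p - 1)))
              - (y p (i p, j p) - y (p - 1) (i (p - 1), j (p - 1)))) := by
          apply Finset.sum_congr rfl; intro p _; ring
      _ = _ := by rw [Finset.sum_sub_distrib, htel]; ring
  -- bound |C| by sum of norms
  have hbound : |C| ≤ ∑ p ∈ Finset.Icc 1 N, ‖y p - y (p - 1)‖ := by
    rw [hC]
    refine (Finset.abs_sum_le_sum_abs _ _).trans (Finset.sum_le_sum ?_)
    intro p _
    have : y p (i (p - 1), j (p - 1)) - y (p - 1) (i (p - 1), j (p - 1))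
        = (y p - y (p - 1)) (i (p - 1), j (p - 1)) := by
      simp [PiLp.sub_apply]
    rw [this]
    exact abs_coord_le_norm _ _
  -- Cauchy–Schwarz
  have hcs : (∑ p ∈ Finset.Icc 1 N, ‖y p - y (p - 1)‖) ^ 2
      ≤ (N : ℝ) * ∑ p ∈ Finset.Icc 1 N, ‖y p - y (p - 1)‖ ^ 2 := by
    have := sq_sum_le_card_mul_sum_sq (s := Finset.Icc 1 N)
      (f := fun p => ‖y p - y (p - 1)‖)
    simpa [Nat.card_Icc] using this
  have h1 : C ^ 2 ≤ (∑ p ∈ Finset.Icc 1 N, ‖y p - y (p - 1)‖) ^ 2 := by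
    rw [← sq_abs C]
    have habs : (0 : ℝ) ≤ |C| := abs_nonneg _
    nlinarith
  rw [div_le_iff₀ hNpos]
  calc C ^ 2 ≤ (∑ p ∈ Finset.Icc 1 N, ‖y p - y (p - 1)‖) ^ 2 := h1
      _ ≤ (N : ℝ) * ∑ p ∈ Finset.Icc 1 N, ‖y p - y (p - 1)‖ ^ 2 := hcs
      _ = (∑ p ∈ Finset.Icc 1 N, ‖y p - y (p - 1)‖ ^ 2) * N := by ring
end
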